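/- Let (X, f_{1,∞}) be a periodic non-autonomous system on a T₃ space X (regular Hausdorff) whose induced map g has a transitive point. If x is a transitive point of (X, f_{1,∞}) and there exists y ∈ X with (x,y) not an equicontinuity pair, then (X, f_{1,∞}) is Hausdorff sensitive. -/

import Mathlib

open Topology Filter Set
open scoped Uniformity

/-- `traj f n = f_n ∘ ⋯ ∘ f_1` (and `traj f 0 = id`), i.e. `f_1^n`. -/
def traj {X : Type*} (f : ℕ → X → X) : ℕ → X → X
  | 0 => id
  | n + 1 => f (n + 1) ∘ traj f n

/-- The family `f` is periodic with period `p`. -/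
def PeriodicFam {X : Type*} (f : ℕ → X → X) (p : ℕ) : Prop :=
  ∀ n, f (n + p) = f n

/-- A set of naturals is thick: it contains arbitrarily long blocks of consecutive integers. -/
def Thick (T : Set ℕ) : Prop :=
  ∀ k : ℕ, ∃ n : ℕ, ∀ i ≤ k, n + i ∈ T

/-- A set of naturals is syndetic: it has bounded gaps. -/
def Syndetic (S : Set ℕ) : Prop :=
  ∃ M : ℕ, ∀ n : ℕ, ∃ m ∈ S, n ≤ m ∧ m ≤ n + M

/-- `x` is a transitive point of the non-autonomous system `(X, f_{1,∞})`. -/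
def TransPt {X : Type*} [TopologicalSpace X] (f : ℕ → X → X) (x : X) : Prop :=
  Dense (Set.range fun n => traj f n x)

/-- `x` is a transitive point of the autonomous system `(X, g)`. -/
def TransPtAut {X : Type*} [TopologicalSpace X] (g : X → X) (x : X) : Prop :=
  Dense (Set.range fun n => g^[n] x)

/-- `x` is an equicontinuity point of `(X, f_{1,∞})` on a uniform space. -/
def EqPt {X : Type*} [UniformSpace X] (f : ℕ → X → X) (x : X) : Prop :=
  ∀ E ∈ 𝓤 X, ∃ D ∈ 𝓤 X, ∀ y : X, (x, y) ∈ D → ∀ n : ℕ, (traj f n x, traj f n y) ∈ E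

/-- `x` is a syndetically equicontinuous point of `(X, f_{1,∞})`. -/
def SynEqPt {X : Type*} [UniformSpace X] (f : ℕ → X → X) (x : X) : Prop :=
  ∀ E ∈ 𝓤 X, ∃ U ∈ 𝓝 x,
    Syndetic {n : ℕ | ∀ x₁ ∈ U, ∀ x₂ ∈ U, (traj f n x₁, traj f n x₂) ∈ E}

/-- `x` is a syndetically equicontinuous point of the autonomous system `(X, g)`. -/
def SynEqPtAut {X : Type*} [UniformSpace X] (g : X → X) (x : X) : Prop :=
  ∀ E ∈ 𝓤 X, ∃ U ∈ 𝓝 x,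
    Syndetic {n : ℕ | ∀ x₁ ∈ U, ∀ x₂ ∈ U, (g^[n] x₁, g^[n] x₂) ∈ E}

/-- `N(U, D)` for the non-autonomous system. -/
def NSet {X : Type*} (f : ℕ → X → X) (U : Set X) (D : Set (X × X)) : Set ℕ :=
  {n : ℕ | 0 < n ∧ ∃ x ∈ U, ∃ y ∈ U, (traj f n x, traj f n y) ∉ D}

/-- `N(U, D)` for the autonomous system. -/
def NSetAut {X : Type*} (g : X → X) (U : Set X) (D : Set (X × X)) : Set ℕ :=
  {n : ℕ | 0 < n ∧ ∃ x ∈ U, ∃ y ∈ U, (g^[n] x, g^[n] y) ∉ D}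

/-- Sensitivity of `(X, f_{1,∞})`. -/
def Sensitive {X : Type*} [UniformSpace X] (f : ℕ → X → X) : Prop :=
  ∃ D ∈ 𝓤 X, ∀ U : Set X, IsOpen U → U.Nonempty → (NSet f U D).Nonempty

/-- Thick sensitivity of `(X, f_{1,∞})`. -/
def ThickSensitive {X : Type*} [UniformSpace X] (f : ℕ → X → X) : Prop :=
  ∃ D ∈ 𝓤 X, ∀ U : Set X, IsOpen U → U.Nonempty → Thick (NSet f U D)

/-- Thick sensitivity of the autonomous system `(X, g)`. -/
def ThickSensitiveAut {X : Type*} [UniformSpace X] (g : X → X) : Prop :=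
  ∃ D ∈ 𝓤 X, ∀ U : Set X, IsOpen U → U.Nonempty → Thick (NSetAut g U D)

/-- Multi-sensitivity of `(X, f_{1,∞})`. -/
def MultiSensitive {X : Type*} [UniformSpace X] (f : ℕ → X → X) : Prop :=
  ∃ D ∈ 𝓤 X, ∀ (k : ℕ) (U : Fin (k + 1) → Set X),
    (∀ i, IsOpen (U i)) → (∀ i, (U i).Nonempty) → (⋂ i, NSet f (U i) D).Nonempty

/-- Multi-sensitivity of the autonomous system `(X, g)`. -/
def MultiSensitiveAut {X : Type*} [UniformSpace X] (g : X → X) : Prop :=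
  ∃ D ∈ 𝓤 X, ∀ (k : ℕ) (U : Fin (k + 1) → Set X),
    (∀ i, IsOpen (U i)) → (∀ i, (U i).Nonempty) → (⋂ i, NSetAut g (U i) D).Nonempty

/-- Eventual sensitivity of `(X, f_{1,∞})` with a given entourage `D`. -/
def EvSensitiveWith {X : Type*} [UniformSpace X] (f : ℕ → X → X) (D : Set (X × X)) : Prop :=
  ∀ x : X, ∀ E ∈ 𝓤 X, ∃ n k : ℕ, 0 < n ∧ 0 < k ∧
    ∃ y : X, (traj f n x, y) ∈ E ∧ (traj f (n + k) x, traj f k y) ∉ D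

/-- Eventual sensitivity of `(X, f_{1,∞})`. -/
def EvSensitive {X : Type*} [UniformSpace X] (f : ℕ → X → X) : Prop :=
  ∃ D ∈ 𝓤 X, EvSensitiveWith f D

/-- Eventual sensitivity of the autonomous system `(X, g)` with entourage `D`. -/
def EvSensitiveAutWith {X : Type*} [UniformSpace X] (g : X → X) (D : Set (X × X)) : Prop :=
  ∀ x : X, ∀ E ∈ 𝓤 X, ∃ q k : ℕ, 0 < q ∧ 0 < k ∧
    ∃ y : X, (g^[q] x, y) ∈ E ∧ (g^[q + k] x, g^[k] y) ∉ D

/-- `(x, y)` is a (topological) equicontinuity pair for `(X, f_{1,∞})`. -/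
def EqPair {X : Type*} [TopologicalSpace X] (f : ℕ → X → X) (x y : X) : Prop :=
  ∀ O ∈ 𝓝 y, ∃ U ∈ 𝓝 x, ∃ V ∈ 𝓝 y, ∀ n : ℕ, 0 < n →
    ((traj f n '' U) ∩ V).Nonempty → traj f n '' U ⊆ O

/-- `(x, y)` is a syndetic equicontinuity pair for `(X, f_{1,∞})`. -/
def SynEqPair {X : Type*} [TopologicalSpace X] (f : ℕ → X → X) (x y : X) : Prop :=
  ∀ O ∈ 𝓝 y, ∃ U ∈ 𝓝 x, ∃ V ∈ 𝓝 y,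
    Syndetic {n : ℕ | ((traj f n '' U) ∩ V).Nonempty → traj f n '' U ⊆ O}

/-- `O` is a splitting neighborhood of `y` with respect to `x`. -/
def SplittingNbhd {X : Type*} [TopologicalSpace X] (f : ℕ → X → X) (x y : X) (O : Set X) :
    Prop :=
  O ∈ 𝓝 y ∧ ∀ U ∈ 𝓝 x, ∀ V ∈ 𝓝 y, ∃ n : ℕ, 0 < n ∧
    ((traj f n '' U) ∩ V).Nonempty ∧ ¬ traj f n '' U ⊆ O

/-- A finite open cover of `X`. -/
def IsFinOpenCover {X : Type*} [TopologicalSpace X] (𝒰 : Finset (Set X)) : Prop :=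
  (∀ U ∈ 𝒰, IsOpen U) ∧ ⋃₀ (↑𝒰 : Set (Set X)) = Set.univ

/-- `N(V, 𝒰)`: times at which `f_1^n(V)` is not contained in any single member of `𝒰`. -/
def HNSet {X : Type*} (f : ℕ → X → X) (V : Set X) (𝒰 : Finset (Set X)) : Set ℕ :=
  {n : ℕ | 0 < n ∧ ∀ U ∈ 𝒰, ¬ traj f n '' V ⊆ U}

/-- `N(V, 𝒰)` for the autonomous system. -/
def HNSetAut {X : Type*} (g : X → X) (V : Set X) (𝒰 : Finset (Set X)) : Set ℕ :=
  {n : ℕ | 0 < n ∧ ∀ U ∈ 𝒰, ¬ g^[n] '' V ⊆ U}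

/-- Hausdorff sensitivity of `(X, f_{1,∞})`. -/
def HSensitive {X : Type*} [TopologicalSpace X] (f : ℕ → X → X) : Prop :=
  ∃ 𝒰 : Finset (Set X), IsFinOpenCover 𝒰 ∧
    ∀ V : Set X, IsOpen V → V.Nonempty → (HNSet f V 𝒰).Nonempty

/-- Hausdorff sensitivity of the autonomous system `(X, g)`. -/
def HSensitiveAut {X : Type*} [TopologicalSpace X] (g : X → X) : Prop :=
  ∃ 𝒰 : Finset (Set X), IsFinOpenCover 𝒰 ∧
    ∀ V : Set X, IsOpen V → V.Nonempty → (HNSetAut g V 𝒰).Nonempty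

/-- Thick Hausdorff sensitivity of `(X, f_{1,∞})`. -/
def ThickHSensitive {X : Type*} [TopologicalSpace X] (f : ℕ → X → X) : Prop :=
  ∃ 𝒰 : Finset (Set X), IsFinOpenCover 𝒰 ∧
    ∀ V : Set X, IsOpen V → V.Nonempty → Thick (HNSet f V 𝒰)

/-- Thick Hausdorff sensitivity of the autonomous system `(X, g)`. -/
def ThickHSensitiveAut {X : Type*} [TopologicalSpace X] (g : X → X) : Prop :=
  ∃ 𝒰 : Finset (Set X), IsFinOpenCover 𝒰 ∧
    ∀ V : Set X, IsOpen V → V.Nonempty → Thick (HNSetAut g V 𝒰)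

/-- Multi-Hausdorff sensitivity of the autonomous system `(X, g)`. -/
def MultiHSensitiveAut {X : Type*} [TopologicalSpace X] (g : X → X) : Prop :=
  ∃ 𝒰 : Finset (Set X), IsFinOpenCover 𝒰 ∧
    ∀ (m : ℕ) (V : Fin (m + 1) → Set X),
      (∀ i, IsOpen (V i)) → (∀ i, (V i).Nonempty) → (⋂ i, HNSetAut g (V i) 𝒰).Nonempty

namespace HSensAux

variable {X : Type*}

/-- `trajFrom f m t = f_{m+t} ∘ ⋯ ∘ f_{m+1}` -/
def trajFrom (f : ℕ → X → X) (m : ℕ) : ℕ → X → X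
  | 0 => id
  | t + 1 => f (m + t + 1) ∘ trajFrom f m t

lemma traj_add (f : ℕ → X → X) (m : ℕ) :
    ∀ t (ξ : X), traj f (m + t) ξ = trajFrom f m t (traj f m ξ)
  | 0, ξ => rfl
  | t + 1, ξ => by
    have h : m + (t + 1) = (m + t) + 1 := rfl
    rw [h]
    show f (m + t + 1) (traj f (m + t) ξ) = f (m + t + 1) (trajFrom f m t (traj f m ξ))
    rw [traj_add f m t ξ]

lemma trajFrom_zero (f : ℕ → X → X) : ∀ t (ξ : X), trajFrom f 0 t ξ = traj f t ξ
  | 0, ξ => rfl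
  | t + 1, ξ => by
    show f (0 + t + 1) (trajFrom f 0 t ξ) = f (t + 1) (traj f t ξ)
    rw [trajFrom_zero f t ξ]
    norm_num

lemma trajFrom_per {f : ℕ → X → X} {p : ℕ} (hper : PeriodicFam f p) (m : ℕ) :
    ∀ t (ξ : X), trajFrom f (m + p) t ξ = trajFrom f m t ξ
  | 0, ξ => rfl
  | t + 1, ξ => by
    show f (m + p + t + 1) (trajFrom f (m+p) t ξ) = f (m + t + 1) (trajFrom f m t ξ)
    rw [trajFrom_per hper m t ξ]
    have h : m + p + t + 1 = (m + t + 1) + p := by omega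
    rw [h, hper]

lemma trajFrom_mulper {f : ℕ → X → X} {p : ℕ} (hper : PeriodicFam f p) (m : ℕ) :
    ∀ k t (ξ : X), trajFrom f (m + k * p) t ξ = trajFrom f m t ξ
  | 0, t, ξ => by norm_num
  | k + 1, t, ξ => by
    have h : m + (k+1) * p = (m + k * p) + p := by ring
    rw [h, trajFrom_per hper _ t ξ, trajFrom_mulper hper m k t ξ]

lemma traj_mul {f : ℕ → X → X} {p : ℕ} (hper : PeriodicFam f p) :
    ∀ k (ξ : X), traj f (k * p) ξ = (traj f p)^[k] ξ
  | 0, ξ => by norm_num [traj]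
  | k + 1, ξ => by
    have h : (k+1) * p = k * p + p := by ring
    rw [h, traj_add f (k*p) p ξ]
    have h2 : trajFrom f (k * p) p (traj f (k*p) ξ) = trajFrom f (0 + k * p) p (traj f (k*p) ξ) := by
      norm_num
    rw [h2, trajFrom_mulper hper 0 k p _, trajFrom_zero, traj_mul hper k ξ,
      Function.iterate_succ_apply']

lemma traj_kp_add {f : ℕ → X → X} {p : ℕ} (hper : PeriodicFam f p) (k t : ℕ) (ξ : X) :
    traj f (k * p + t) ξ = traj f t ((traj f p)^[k] ξ) := by
  rw [traj_add f (k*p) t ξ]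
  have h2 : trajFrom f (k * p) t (traj f (k*p) ξ) = trajFrom f (0 + k * p) t (traj f (k*p) ξ) := by
    norm_num
  rw [h2, trajFrom_mulper hper 0 k t _, trajFrom_zero, traj_mul hper k ξ]

variable [TopologicalSpace X]

lemma traj_cont {f : ℕ → X → X} (hf : ∀ n, Continuous (f n)) : ∀ n, Continuous (traj f n)
  | 0 => continuous_id
  | n + 1 => (hf (n+1)).comp (traj_cont hf n)

lemma trajFrom_cont {f : ℕ → X → X} (hf : ∀ n, Continuous (f n)) (m : ℕ) :
    ∀ t, Continuous (trajFrom f m t)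
  | 0 => continuous_id
  | t + 1 => (hf (m + t + 1)).comp (trajFrom_cont hf m t)

end HSensAux

theorem hSensitive_of_not_eqPair {X : Type*} [TopologicalSpace X] [T3Space X]
    (f : ℕ → X → X) (hf : ∀ n, Continuous (f n))
    (p : ℕ) (hp : 0 < p) (hper : PeriodicFam f p)
    (htrans : ∃ x, TransPtAut (traj f p) x)
    (x : X) (hx : TransPt f x) (y : X) (hy : ¬ EqPair f x y) :
    HSensitive f := by
  classical
  -- Extract a splitting neighborhood from the failure of `EqPair`.
  simp only [EqPair] at hy
  push_neg at hy
  obtain ⟨O, hOy, hsplit⟩ := hy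
  have htrajc : ∀ n, Continuous (traj f n) := HSensAux.traj_cont hf
  -- T3 chain: y ∈ O₂ ⊆ closure O₂ ⊆ O₁ ⊆ closure O₁ ⊆ A = interior O ⊆ O
  set A : Set X := interior O with hAdef
  have hAopen : IsOpen A := isOpen_interior
  have hAy : y ∈ A := mem_interior_iff_mem_nhds.mpr hOy
  have hAO : A ⊆ O := interior_subset
  obtain ⟨C₁, hC₁y, hC₁closed, hC₁A⟩ := exists_mem_nhds_isClosed_subset (hAopen.mem_nhds hAy)
  set O₁ : Set X := interior C₁ with hO₁def
  have hO₁open : IsOpen O₁ := isOpen_interior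
  have hyO₁ : y ∈ O₁ := mem_interior_iff_mem_nhds.mpr hC₁y
  have hclO₁A : closure O₁ ⊆ A := (closure_minimal interior_subset hC₁closed).trans hC₁A
  obtain ⟨C₂, hC₂y, hC₂closed, hC₂O₁⟩ := exists_mem_nhds_isClosed_subset (hO₁open.mem_nhds hyO₁)
  set O₂ : Set X := interior C₂ with hO₂def
  have hO₂open : IsOpen O₂ := isOpen_interior
  have hyO₂ : y ∈ O₂ := mem_interior_iff_mem_nhds.mpr hC₂y
  have hclO₂O₁ : closure O₂ ⊆ O₁ := (closure_minimal interior_subset hC₂closed).trans hC₂O₁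
  have hclO₂A : closure O₂ ⊆ A := hclO₂O₁.trans (subset_closure.trans hclO₁A)
  have hO₁O : O₁ ⊆ O := (subset_closure.trans hclO₁A).trans hAO
  have hO₂O : O₂ ⊆ O := (subset_closure.trans hclO₂A).trans hAO
  -- Shrinking trick: splitting times can be made arbitrarily large.
  have hshrink : ∀ U : Set X, IsOpen U → x ∈ U → ∀ M : ℕ,
      ∃ n, M < n ∧ ((traj f n '' U) ∩ O₂).Nonempty ∧ ¬ traj f n '' U ⊆ O := by
    intro U hU hxU M
    set S : ℕ → Set X := fun j =>
      if traj f j x ∈ A then (traj f j)⁻¹' A else (traj f j)⁻¹' (closure O₂)ᶜ with hSdef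
    have hSeq : ∀ j, S j =
        if traj f j x ∈ A then (traj f j)⁻¹' A else (traj f j)⁻¹' (closure O₂)ᶜ :=
      fun j => rfl
    have hSopen : ∀ j, IsOpen (S j) := by
      intro j
      rw [hSeq j]
      split
      · exact hAopen.preimage (htrajc j)
      · exact isClosed_closure.isOpen_compl.preimage (htrajc j)
    have hxS : ∀ j, x ∈ S j := by
      intro j
      rw [hSeq j]
      split
      next h => exact h
      next h => exact fun hmem => h (hclO₂A hmem)
    set U' : Set X := U ∩ ⋂ j ∈ Finset.range (M+1), S j with hU'def
    have hU'open : IsOpen U' := hU.inter (isOpen_biInter_finset fun j _ => hSopen j)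
    have hxU' : x ∈ U' := ⟨hxU, mem_iInter₂.mpr fun j _ => hxS j⟩
    obtain ⟨n, hn0, hne, hesc⟩ := hsplit U' (hU'open.mem_nhds hxU') O₂ (hO₂open.mem_nhds hyO₂)
    have hsubU : traj f n '' U' ⊆ traj f n '' U := image_mono inter_subset_left
    refine ⟨n, ?_, hne.mono (inter_subset_inter hsubU subset_rfl),
      fun hcon => hesc (fun c hc => hcon (hsubU hc))⟩
    by_contra hle
    push_neg at hle
    have hjmem : n ∈ Finset.range (M+1) := Finset.mem_range.mpr (by omega)
    have hsubj : U' ⊆ S n := fun u hu => mem_iInter₂.mp hu.2 n hjmem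
    by_cases hA : traj f n x ∈ A
    · refine hesc ?_
      rintro c ⟨u, hu, rfl⟩
      have h1 := hsubj hu
      rw [hSeq n, if_pos hA] at h1
      exact hAO h1
    · obtain ⟨c, ⟨u, hu, rfl⟩, hc2⟩ := hne
      have h1 := hsubj hu
      rw [hSeq n, if_neg hA] at h1
      exact h1 (subset_closure hc2)
  -- X has no isolated points.
  have hnoiso : ∀ a : X, ¬ IsOpen ({a} : Set X) := by
    intro a ha
    obtain ⟨w, ⟨m, rfl⟩, hm⟩ := hx.exists_mem_open ha ⟨a, rfl⟩
    rw [mem_singleton_iff] at hm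
    have hUopen : IsOpen ((traj f m)⁻¹' {a}) := ha.preimage (htrajc m)
    have hxU : x ∈ (traj f m)⁻¹' {a} := hm
    obtain ⟨n, hnm, hne, hesc⟩ := hshrink _ hUopen hxU m
    have hb : ∀ u, u ∈ (traj f m)⁻¹' {a} → traj f n u = HSensAux.trajFrom f m (n - m) a := by
      intro u hu
      have h2 := HSensAux.traj_add f m (n - m) u
      rw [show m + (n - m) = n by omega] at h2
      rw [h2, show traj f m u = a from hu]
    obtain ⟨c, ⟨u, hu, hcu⟩, hcO₂⟩ := hne
    obtain ⟨d, ⟨u', hu', hdu⟩, hdO⟩ := Set.not_subset.mp hesc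
    rw [← hcu, hb u hu] at hcO₂
    rw [← hdu, hb u' hu'] at hdO
    exact hdO (hO₂O hcO₂)
  -- open nonempty sets are not contained in finite sets
  have hopen_not_fin : ∀ V : Set X, IsOpen V → V.Nonempty → ∀ F : Set X, F.Finite → ¬ V ⊆ F := by
    rintro V hV ⟨v, hv⟩ F hF hVF
    apply hnoiso v
    have h1 : V ∩ (V \ {v})ᶜ = {v} := by
      ext w
      simp only [mem_inter_iff, mem_compl_iff, mem_diff, mem_singleton_iff, not_and, not_not]
      constructor
      · rintro ⟨hwV, hw2⟩
        exact hw2 hwV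
      · rintro rfl
        exact ⟨hv, fun _ => rfl⟩
    rw [← h1]
    exact hV.inter ((hF.subset (diff_subset.trans hVF)).isClosed.isOpen_compl)
  -- z : transitive point of g
  obtain ⟨z, hz⟩ := htrans
  -- KEY LEMMA: the g-orbit of x is dense.
  have hDorb : Dense (Set.range fun k => (traj f p)^[k] x) := by
    by_contra hD
    have hD' : ∃ ξ₀, ξ₀ ∉ closure (Set.range fun k => (traj f p)^[k] x) := by
      by_contra hc
      push_neg at hc
      exact hD hc
    obtain ⟨ξ₀, hξ₀⟩ := hD'
    set D : Set X := closure (Set.range fun k => (traj f p)^[k] x) with hDdef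
    set Cr : ℕ → Set X := fun r =>
      closure (traj f r '' (Set.range fun k => (traj f p)^[k] x)) with hCrdef
    -- the sets Cr r, r < p, cover X
    have hcov : ∀ ξ : X, ∃ r < p, ξ ∈ Cr r := by
      intro ξ
      have h2 : (Set.range fun m => traj f m x) ⊆ ⋃ r ∈ Set.Iio p, Cr r := by
        rintro w ⟨m, rfl⟩
        refine mem_biUnion (show m % p ∈ Set.Iio p from Nat.mod_lt m hp) ?_
        have hm : (m / p) * p + m % p = m := by
          have h0 := Nat.div_add_mod m p
          have h1 : (m / p) * p = p * (m / p) := Nat.mul_comm _ _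
          omega
        have h3 := HSensAux.traj_kp_add hper (m / p) (m % p) x
        rw [hm] at h3
        show traj f m x ∈ Cr (m % p)
        rw [h3]
        exact subset_closure (mem_image_of_mem _ ⟨_, rfl⟩)
      have h3 : IsClosed (⋃ r ∈ Set.Iio p, Cr r) :=
        (Set.finite_Iio p).isClosed_biUnion fun _ _ => isClosed_closure
      have h4 := closure_minimal h2 h3 (hx ξ)
      simpa using mem_iUnion₂.mp h4
    -- each Cr r (r < p) has empty interior
    have hint : ∀ r, r < p → interior (Cr r) = ∅ := by
      intro r hrp
      by_contra hWne
      obtain ⟨w, hw⟩ := nonempty_iff_ne_empty.mpr hWne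
      -- Y : phase-r hull of the z-orbit
      set Y : Set X := closure (Set.range fun k => traj f r ((traj f p)^[k] z)) with hYdef
      have htrajY : ∀ ξ : X, traj f r ξ ∈ Y := by
        intro ξ
        have h1 : traj f r ξ ∈ traj f r '' closure (Set.range fun k => (traj f p)^[k] z) :=
          mem_image_of_mem _ (hz ξ)
        have h2 := image_closure_subset_closure_image (htrajc r) h1
        rwa [hYdef, show (Set.range fun k => traj f r ((traj f p)^[k] z))
          = traj f r '' Set.range (fun k => (traj f p)^[k] z) from Set.range_comp _ _]
      have hCY : Cr r ⊆ Y := by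
        refine closure_minimal ?_ isClosed_closure
        rintro w' ⟨ζ, ⟨k, rfl⟩, rfl⟩
        exact htrajY _
      -- the swap identity
      have hswap : ∀ ξ : X, HSensAux.trajFrom f r p (traj f r ξ) = traj f r (traj f p ξ) := by
        intro ξ
        rw [← HSensAux.traj_add]
        have h1 : r + p = 1 * p + r := by ring
        rw [h1, HSensAux.traj_kp_add hper 1 r ξ, Function.iterate_one]
      -- Cr r is invariant under trajFrom f r p
      have hCrinv : ∀ η ∈ Cr r, HSensAux.trajFrom f r p η ∈ Cr r := by
        intro η hη
        have h1 := image_closure_subset_closure_image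
          (HSensAux.trajFrom_cont hf r p) (mem_image_of_mem _ hη)
        refine closure_mono ?_ h1
        rintro w' ⟨w'', ⟨ζ, ⟨k, rfl⟩, rfl⟩, rfl⟩
        show HSensAux.trajFrom f r p (traj f r ((traj f p)^[k] x))
          ∈ traj f r '' Set.range fun k => (traj f p)^[k] x
        rw [hswap]
        exact ⟨(traj f p)^[k+1] x, ⟨k+1, rfl⟩,
          congrArg (traj f r) (Function.iterate_succ_apply' (traj f p) k x)⟩
      -- a z-orbit point in the interior
      have hwY : w ∈ Y := hCY (interior_subset hw)
      have h5 : ((interior (Cr r)) ∩ Set.range fun k => traj f r ((traj f p)^[k] z)).Nonempty := by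
        rw [hYdef] at hwY
        exact mem_closure_iff.mp hwY _ isOpen_interior hw
      obtain ⟨w', hw'mem, k₀, hk₀⟩ := h5
      -- tail of the phase-r z-orbit stays in Cr r
      have htail : ∀ k, k₀ ≤ k → traj f r ((traj f p)^[k] z) ∈ Cr r := by
        intro k hk
        induction k, hk using Nat.le_induction with
        | base =>
          have hk₀' : traj f r ((traj f p)^[k₀] z) = w' := hk₀
          rw [hk₀']
          exact interior_subset hw'mem
        | succ k hk ih =>
          have h1 : traj f r ((traj f p)^[k+1] z)
              = HSensAux.trajFrom f r p (traj f r ((traj f p)^[k] z)) := by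
            rw [hswap, Function.iterate_succ_apply' (traj f p) k z]
          rw [h1]
          exact hCrinv _ ih
      -- Y is contained in a finite prefix together with Cr r
      set Pref : Set X := (fun k => traj f r ((traj f p)^[k] z)) '' {k | k < k₀} with hPrefdef
      have hPreffin : Pref.Finite := (Set.finite_Iio k₀).image _
      have hYsub : Y ⊆ Pref ∪ Cr r := by
        refine closure_minimal ?_ (hPreffin.isClosed.union isClosed_closure)
        rintro w'' ⟨k, rfl⟩
        show traj f r ((traj f p)^[k] z) ∈ Pref ∪ Cr r
        rcases lt_or_ge k k₀ with h | h
        · exact Or.inl (mem_image_of_mem _ h)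
        · exact Or.inr (htail k h)
      by_cases hcase : Y ⊆ Cr r
      · -- case (a): g maps everything into D; contradiction with density of the z-orbit
        have hpsig : ∀ ξ : X, HSensAux.trajFrom f r (p - r) (traj f r ξ) = traj f p ξ := by
          intro ξ
          rw [← HSensAux.traj_add]
          congr 1
          omega
        have hgD : ∀ ξ : X, traj f p ξ ∈ D := by
          intro ξ
          have h1 : traj f r ξ ∈ Cr r := hcase (htrajY ξ)
          have h2 := image_closure_subset_closure_image
            (HSensAux.trajFrom_cont hf r (p - r)) (mem_image_of_mem _ h1)
          rw [← hpsig ξ]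
          refine closure_mono ?_ h2
          rintro w'' ⟨w₃, ⟨ζ, ⟨k, rfl⟩, rfl⟩, rfl⟩
          show HSensAux.trajFrom f r (p - r) (traj f r ((traj f p)^[k] x))
            ∈ Set.range fun k => (traj f p)^[k] x
          rw [hpsig]
          exact ⟨k + 1, Function.iterate_succ_apply' (traj f p) k x⟩
        have hsub2 : ∀ ξ : X, ξ ∈ ({z} : Set X) ∪ D := by
          intro ξ
          refine closure_minimal ?_ ((isClosed_singleton).union isClosed_closure) (hz ξ)
          rintro w'' ⟨k, rfl⟩
          show (traj f p)^[k] z ∈ ({z} : Set X) ∪ D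
          cases k with
          | zero => exact Or.inl rfl
          | succ k =>
            right
            rw [Function.iterate_succ_apply' (traj f p) k z]
            exact hgD _
        have hzeq : ξ₀ = z := by
          rcases hsub2 ξ₀ with h | h
          · exact h
          · exact absurd h hξ₀
        have hcompl : Dᶜ = ({z} : Set X) := by
          ext w''
          simp only [mem_compl_iff, mem_singleton_iff]
          constructor
          · intro h
            rcases hsub2 w'' with h' | h'
            · exact h'
            · exact absurd h' h
          · rintro rfl
            rw [← hzeq]
            exact hξ₀
        exact hnoiso z (by rw [← hcompl]; exact isClosed_closure.isOpen_compl)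
      · -- case (b): an isolated point of Y leads to eventual periodicity of the z-orbit
        rw [Set.not_subset] at hcase
        obtain ⟨ω, hωY, hωC⟩ := hcase
        set G₀ : Set X := (Cr r ∪ (Pref \ {ω}))ᶜ with hG₀def
        have hG₀open : IsOpen G₀ :=
          (isClosed_closure.union ((hPreffin.subset diff_subset).isClosed)).isOpen_compl
        have hωG₀ : ω ∈ G₀ := by
          rw [hG₀def]
          intro h
          rcases h with h | h
          · exact hωC h
          · exact h.2 rfl
        have hkey : ∀ ξ : X, traj f r ξ ∈ G₀ → traj f r ξ = ω := by
          intro ξ hξ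
          have h1 : traj f r ξ ∈ Y := htrajY ξ
          have h2 : traj f r ξ ∉ Cr r := fun h => hξ (Or.inl h)
          rcases hYsub h1 with h3 | h3
          · by_contra hne
            exact hξ (Or.inr ⟨h3, hne⟩)
          · exact absurd h3 h2
        -- first visit
        have h6 : (G₀ ∩ Set.range fun k => traj f r ((traj f p)^[k] z)).Nonempty :=
          mem_closure_iff.mp hωY _ hG₀open hωG₀
        obtain ⟨w₁, hw₁G₀, k₁, hk₁⟩ := h6
        have hk₁' : traj f r ((traj f p)^[k₁] z) = w₁ := hk₁
        have he₁ : traj f r ((traj f p)^[k₁] z) = ω := hkey _ (by rw [hk₁']; exact hw₁G₀)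
        -- second, later visit
        set H : Set X := (traj f r)⁻¹' G₀ with hHdef
        have hHopen : IsOpen H := hG₀open.preimage (htrajc r)
        have hHne : ((traj f p)^[k₁] z) ∈ H := by
          rw [hHdef, mem_preimage, he₁]
          exact hωG₀
        set F₁ : Set X := (fun j => (traj f p)^[j] z) '' {j | j ≤ k₁} with hF₁def
        have hF₁fin : F₁.Finite := (Set.finite_Iic k₁).image _
        have hH'ne : (H \ F₁).Nonempty :=
          Set.not_subset.mp (hopen_not_fin H hHopen ⟨_, hHne⟩ F₁ hF₁fin) |>.imp
            fun a ⟨h1, h2⟩ => ⟨h1, h2⟩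
        have hH'open : IsOpen (H \ F₁) := hHopen.sdiff hF₁fin.isClosed
        obtain ⟨w₂, ⟨k₂, hk₂⟩, hw₂H'⟩ := hz.exists_mem_open hH'open hH'ne
        have hk₂' : (traj f p)^[k₂] z = w₂ := hk₂
        rw [← hk₂'] at hw₂H'
        have hk₁k₂ : k₁ < k₂ := by
          by_contra h
          push_neg at h
          exact hw₂H'.2 ⟨k₂, h, rfl⟩
        have he₂ : traj f r ((traj f p)^[k₂] z) = ω := hkey _ hw₂H'.1
        -- determinism: the trajectory after both visits coincides
        have hcollapse : ∀ k i, 1 ≤ i → traj f r ((traj f p)^[k] z) = ω →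
            (traj f p)^[k + i] z = HSensAux.trajFrom f r (i * p - r) ω := by
          intro k i hi he
          have hrle : r ≤ i * p := le_trans (Nat.le_of_lt hrp) (Nat.le_mul_of_pos_left p hi)
          have h1 : (k + i) * p = (k * p + r) + (i * p - r) := by
            have : (k + i) * p = k * p + i * p := by ring
            omega
          have h2 : (traj f p)^[k + i] z = traj f ((k + i) * p) z :=
            (HSensAux.traj_mul hper (k + i) z).symm
          rw [h2, h1, HSensAux.traj_add]
          have h4 : traj f (k * p + r) z = ω := (HSensAux.traj_kp_add hper k r z).trans he
          rw [h4]
          rw [show k * p + r = r + k * p by ring]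
          exact HSensAux.trajFrom_mulper hper r k (i * p - r) ω
        have hperiodic : ∀ i, 1 ≤ i → (traj f p)^[k₁ + i] z = (traj f p)^[k₂ + i] z := by
          intro i hi
          rw [hcollapse k₁ i hi he₁, hcollapse k₂ i hi he₂]
        -- the z-orbit is finite, contradiction
        set F₂ : Set X := (fun j => (traj f p)^[j] z) '' {j | j ≤ k₂} with hF₂def
        have hF₂fin : F₂.Finite := (Set.finite_Iic k₂).image _
        have hbound : ∀ j, (traj f p)^[j] z ∈ F₂ := by
          intro j
          induction j using Nat.strong_induction_on with
          | _ j ih =>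
            by_cases hj : j ≤ k₂
            · exact ⟨j, hj, rfl⟩
            · push_neg at hj
              have hi : 1 ≤ j - k₂ := by omega
              have h1 : k₂ + (j - k₂) = j := by omega
              have h2 := hperiodic (j - k₂) hi
              rw [h1] at h2
              rw [← h2]
              exact ih (k₁ + (j - k₂)) (by omega)
        have huniv : ∀ ξ : X, ξ ∈ F₂ := by
          intro ξ
          refine closure_minimal ?_ hF₂fin.isClosed (hz ξ)
          rintro w'' ⟨j, rfl⟩
          exact hbound j
        exact hopen_not_fin univ isOpen_univ ⟨x, trivial⟩ F₂ hF₂fin fun ξ _ => huniv ξ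
    -- stripping: finitely many closed sets with empty interior cannot cover X
    have hstrip : ∀ k, k ≤ p → ∃ V : Set X, IsOpen V ∧ V.Nonempty ∧ ∀ r < k, V ∩ Cr r = ∅ := by
      intro k
      induction k with
      | zero => exact fun _ => ⟨univ, isOpen_univ, ⟨x, trivial⟩, fun r h => absurd h (Nat.not_lt_zero r)⟩
      | succ k ih =>
        intro hk
        obtain ⟨V, hVopen, hVne, hVdisj⟩ := ih (by omega)
        refine ⟨V \ Cr k, hVopen.sdiff isClosed_closure, ?_, ?_⟩
        · by_contra hempty
          rw [Set.not_nonempty_iff_eq_empty] at hempty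
          have hsub : V ⊆ Cr k := by
            intro v hv
            by_contra hvc
            exact absurd (Set.eq_empty_iff_forall_notMem.mp hempty v ⟨hv, hvc⟩) not_false
          have : V ⊆ interior (Cr k) := interior_maximal hsub hVopen
          rw [hint k (by omega)] at this
          exact absurd (this hVne.choose_spec) not_false
        · intro r hr
          rcases Nat.lt_succ_iff_lt_or_eq.mp hr with h | h
          · rw [Set.eq_empty_iff_forall_notMem]
            rintro v ⟨hv1, hv2⟩
            exact absurd (Set.eq_empty_iff_forall_notMem.mp (hVdisj r h) v ⟨hv1.1, hv2⟩) not_false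
          · subst h
            rw [Set.eq_empty_iff_forall_notMem]
            rintro v ⟨hv1, hv2⟩
            exact hv1.2 hv2
    obtain ⟨V, hVopen, ⟨v, hv⟩, hVdisj⟩ := hstrip p le_rfl
    obtain ⟨r, hrp, hvr⟩ := hcov v
    exact absurd (Set.eq_empty_iff_forall_notMem.mp (hVdisj r hrp) v ⟨hv, hvr⟩) not_false
  -- MAIN ARGUMENT
  refine ⟨{O₁, (closure O₂)ᶜ}, ⟨?_, ?_⟩, ?_⟩
  · intro U hU
    rcases Finset.mem_insert.mp hU with h | h
    · rw [h]; exact hO₁open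
    · rw [Finset.mem_singleton.mp h]
      exact isClosed_closure.isOpen_compl
  · ext ξ
    simp only [Finset.coe_insert, Finset.coe_singleton, sUnion_insert, sUnion_singleton,
      mem_union, mem_univ, iff_true, mem_compl_iff]
    by_cases h : ξ ∈ closure O₂
    · exact Or.inl (hclO₂O₁ h)
    · exact Or.inr h
  · intro V hVopen hVne
    obtain ⟨w, ⟨k, rfl⟩, hkV⟩ := hDorb.exists_mem_open hVopen hVne
    set U : Set X := (traj f (k * p))⁻¹' V with hUdef
    have hUopen : IsOpen U := hVopen.preimage (htrajc _)
    have hxU : x ∈ U := by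
      rw [hUdef, mem_preimage, HSensAux.traj_mul hper k x]
      exact hkV
    obtain ⟨n, hkn, hne, hesc⟩ := hshrink U hUopen hxU (k * p)
    have himg : traj f n '' U ⊆ traj f (n - k * p) '' V := by
      rintro c ⟨u, hu, rfl⟩
      have h2 := HSensAux.traj_kp_add hper k (n - k * p) u
      rw [show k * p + (n - k * p) = n by omega] at h2
      rw [h2]
      refine ⟨(traj f p)^[k] u, ?_, rfl⟩
      rw [← HSensAux.traj_mul hper k u]
      exact hu
    refine ⟨n - k * p, by omega, ?_⟩
    intro W hW
    rcases Finset.mem_insert.mp hW with h | h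
    · subst h
      obtain ⟨d, hd, hdO⟩ := Set.not_subset.mp hesc
      intro hcon
      exact hdO (hO₁O (hcon (himg hd)))
    · rw [Finset.mem_singleton.mp h]
      obtain ⟨c, hc, hcO₂⟩ := hne
      intro hcon
      exact hcon (himg hc) (subset_closure hcO₂)
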